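/- Let α ∈ 𝕋^d be rationally independent, F(θ,z) = (θ+α, f_θ(z)) a fibered holomorphic dynamics with the zero section invariant and |∂_z f_θ(0)| = 1 for all θ. Let 𝒰 be a bounded open invariant tube (F(𝒰) ⊂ 𝒰) containing the zero section whose fibers 𝒰_θ are simply connected domains containing 0. Then the conformal radius R(θ) of the fiber 𝒰_θ at 0 is independent of θ. -/

import Mathlib

open Metric Set

instance : Fact ((0:ℝ) < 1) := ⟨one_pos⟩

/-- The `d`-dimensional torus `𝕋^d = ℝ^d/ℤ^d`. -/
abbrev Torus (d : ℕ) := Fin d → AddCircle (1:ℝ)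

/-- `α` is rationally independent iff the rotation `θ ↦ θ + α` is minimal. -/
def RatIndep {d : ℕ} (α : Torus d) : Prop :=
  ∀ θ : Torus d, Dense (Set.range fun n : ℕ => θ + n • α)

open Function Filter Topology in
/-- The set-theoretic inverse of a holomorphic bijection between open sets is holomorphic. -/
lemma invFunOn_differentiableOn {s t : Set ℂ} (hs : IsOpen s) (hsc : IsPreconnected s)
    (ht : IsOpen t) {g : ℂ → ℂ} (hg : DifferentiableOn ℂ g s) (hb : Set.BijOn g s t)
    {z₀ : ℂ} (hz₀ : z₀ ∈ s) (hd0 : deriv g z₀ ≠ 0) :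
    DifferentiableOn ℂ (Function.invFunOn g s) t := by
  set G := Function.invFunOn g s with hGdef
  have hleft : ∀ z ∈ s, G (g z) = z := fun z hz => hb.injOn.leftInvOn_invFunOn hz
  have hright : ∀ w ∈ t, g (G w) = w := fun w hw => hb.surjOn.rightInvOn_invFunOn hw
  have hmaps : Set.MapsTo G t s := hb.surjOn.mapsTo_invFunOn
  have han : AnalyticOnNhd ℂ g s := hg.analyticOnNhd hs
  -- `g` is an open map on `s`
  have hopenmap : ∀ V ⊆ s, IsOpen V → IsOpen (g '' V) := by
    rcases han.is_constant_or_isOpen hsc with ⟨w, hw⟩ | hop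
    · exfalso
      apply hd0
      have hev : g =ᶠ[nhds z₀] fun _ => w :=
        Filter.eventually_of_mem (hs.mem_nhds hz₀) fun x hx => hw x hx
      rw [hev.deriv_eq, deriv_const]
    · exact fun V hV hVo => hop V hV hVo
  -- the inverse is continuous
  have hcont : ContinuousOn G t := by
    rw [_root_.continuousOn_iff']
    intro V hV
    refine ⟨g '' (V ∩ s), hopenmap _ inter_subset_right (hV.inter hs), ?_⟩
    ext w
    simp only [mem_inter_iff, mem_preimage, mem_image]
    constructor
    · rintro ⟨hGw, hwt⟩
      exact ⟨⟨G w, ⟨hGw, hmaps hwt⟩, hright w hwt⟩, hwt⟩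
    · rintro ⟨⟨v, ⟨hvV, hvs⟩, rfl⟩, hwt⟩
      refine ⟨?_, hwt⟩
      rw [hleft v hvs]; exact hvV
  -- zeros of `deriv g` are isolated
  have hiso : ∀ z ∈ s, ∀ᶠ w in 𝓝[≠] z, deriv g w ≠ 0 := by
    intro z hz
    rcases (han.deriv z hz).eventually_eq_zero_or_eventually_ne_zero with h0 | h1
    · exact absurd (han.deriv.eqOn_zero_of_preconnected_of_eventuallyEq_zero hsc hz h0 hz₀) hd0
    · exact h1
  -- differentiability of the inverse at regular points
  have key : ∀ w ∈ t, deriv g (G w) ≠ 0 → DifferentiableAt ℂ G w := by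
    intro w hw hne
    have hGw : G w ∈ s := hmaps hw
    have hfg : ∀ᶠ y in nhds w, g (G y) = y :=
      Filter.eventually_of_mem (ht.mem_nhds hw) fun y hy => hright y hy
    have hgd : HasDerivAt g (deriv g (G w)) (G w) :=
      (hg.differentiableAt (hs.mem_nhds hGw)).hasDerivAt
    exact (HasDerivAt.of_local_left_inverse (hcont.continuousAt (ht.mem_nhds hw))
      hgd hne hfg).differentiableAt
  intro w hw
  by_cases hne : deriv g (G w) ≠ 0
  · exact (key w hw hne).differentiableWithinAt
  push_neg at hne
  have hzs : G w ∈ s := hmaps hw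
  have hwgz : g (G w) = w := hright w hw
  -- a small neighborhood of `G w` where `deriv g` vanishes only at `G w`
  have hmem : {x | x ≠ G w → deriv g x ≠ 0} ∩ s ∈ nhds (G w) := by
    refine Filter.inter_mem ?_ (hs.mem_nhds hzs)
    have h' := hiso (G w) hzs
    rwa [eventually_nhdsWithin_iff] at h'
  obtain ⟨N, hNsub, hNopen, hzN⟩ := _root_.mem_nhds_iff.mp hmem
  have hNs : N ⊆ s := hNsub.trans inter_subset_right
  have ht' : IsOpen (g '' N) := hopenmap N hNs hNopen
  have hwt' : w ∈ g '' N := ⟨G w, hzN, hwgz⟩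
  have himgsub : g '' N ⊆ t := by
    rintro _ ⟨x, hxN, rfl⟩; exact hb.mapsTo (hNs hxN)
  have hdOn : DifferentiableOn ℂ G (g '' N) := by
    rw [← Complex.differentiableOn_compl_singleton_and_continuousAt_iff
      (c := w) (ht'.mem_nhds hwt')]
    constructor
    · rintro y ⟨⟨x, hxN, rfl⟩, hyne⟩
      have hxz : x ≠ G w := by
        rintro rfl
        exact hyne (by simp [hwgz])
      have hGy : G (g x) = x := hleft x (hNs hxN)
      have hdne : deriv g (G (g x)) ≠ 0 := by
        rw [hGy]; exact (hNsub hxN).1 hxz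
      exact (key _ (himgsub ⟨x, hxN, rfl⟩) hdne).differentiableWithinAt
    · exact hcont.continuousAt (ht.mem_nhds hw)
  exact (hdOn.differentiableAt (ht'.mem_nhds hwt')).differentiableWithinAt

/-- **The conformal radius of the fibers of an invariant tube is constant.**
For a fibered holomorphic dynamics with invariant zero section and `|∂_z f_θ(0)| = 1`, and a
bounded open invariant tube `𝒰` with simply connected fibers `𝒰_θ ∋ 0` uniformized by
`h θ : 𝔻 → 𝒰_θ` (with `h θ 0 = 0`, `(h θ)'(0) = R θ > 0`), the conformal radius `R θ` does
not depend on `θ`. -/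
theorem conformal_radius_constant {d : ℕ} (α : Torus d) (hα : RatIndep α)
    (f : Torus d → ℂ → ℂ) (𝒰 : Set (Torus d × ℂ))
    (hopen : IsOpen 𝒰)
    (hbdd : Bornology.IsBounded (Prod.snd '' 𝒰))
    (hzero : ∀ θ : Torus d, (θ, (0:ℂ)) ∈ 𝒰)
    (hcont : ContinuousOn (fun p : Torus d × ℂ => f p.1 p.2) 𝒰)
    (hhol : ∀ θ : Torus d, DifferentiableOn ℂ (f θ) {z : ℂ | (θ, z) ∈ 𝒰})
    (hinj : Set.InjOn (fun p : Torus d × ℂ => (p.1 + α, f p.1 p.2)) 𝒰)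
    (hfix : ∀ θ : Torus d, f θ 0 = 0)
    (hinv : ∀ p ∈ 𝒰, (p.1 + α, f p.1 p.2) ∈ 𝒰)
    (hone : ∀ θ : Torus d, ‖deriv (f θ) 0‖ = 1)
    (h : Torus d → ℂ → ℂ) (R : Torus d → ℝ)
    (hholh : ∀ θ : Torus d, DifferentiableOn ℂ (h θ) (ball (0:ℂ) 1))
    (hbij : ∀ θ : Torus d, Set.BijOn (h θ) (ball (0:ℂ) 1) {z : ℂ | (θ, z) ∈ 𝒰})
    (hfixh : ∀ θ : Torus d, h θ 0 = 0)
    (hpos : ∀ θ : Torus d, 0 < R θ)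
    (hR : ∀ θ : Torus d, deriv (h θ) 0 = (R θ : ℂ)) :
    ∀ θ θ' : Torus d, R θ = R θ' := by
  classical
  have hDopen : IsOpen (ball (0:ℂ) 1) := isOpen_ball
  have hDconn : IsPreconnected (ball (0:ℂ) 1) := (convex_ball (0:ℂ) 1).isPreconnected
  have h0D : (0:ℂ) ∈ ball (0:ℂ) 1 := mem_ball_self one_pos
  have hUopen : ∀ θ : Torus d, IsOpen {z : ℂ | (θ, z) ∈ 𝒰} := fun θ =>
    hopen.preimage (Continuous.prodMk_right θ)
  have hRne : ∀ θ : Torus d, (R θ : ℂ) ≠ 0 := fun θ => by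
    exact_mod_cast (hpos θ).ne'
  have hderivh : ∀ θ : Torus d, HasDerivAt (h θ) (R θ : ℂ) 0 := fun θ => by
    have := ((hholh θ).differentiableAt (hDopen.mem_nhds h0D)).hasDerivAt
    rwa [hR θ] at this
  set G : Torus d → ℂ → ℂ := fun θ => Function.invFunOn (h θ) (ball (0:ℂ) 1) with hGdef
  have hGdiff : ∀ θ : Torus d, DifferentiableOn ℂ (G θ) {z : ℂ | (θ, z) ∈ 𝒰} := fun θ =>
    invFunOn_differentiableOn hDopen hDconn (hUopen θ) (hholh θ) (hbij θ) h0D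
      (by rw [hR]; exact hRne θ)
  have hGleft : ∀ θ : Torus d, ∀ z ∈ ball (0:ℂ) 1, G θ (h θ z) = z := fun θ z hz =>
    (hbij θ).injOn.leftInvOn_invFunOn hz
  have hGmaps : ∀ θ : Torus d, Set.MapsTo (G θ) {z : ℂ | (θ, z) ∈ 𝒰} (ball (0:ℂ) 1) :=
    fun θ => (hbij θ).surjOn.mapsTo_invFunOn
  have hG0 : ∀ θ : Torus d, G θ 0 = 0 := fun θ => by
    have := hGleft θ 0 h0D
    rwa [hfixh θ] at this
  -- derivative of the inverse at the origin
  have hGderiv : ∀ θ : Torus d, HasDerivAt (G θ) ((R θ : ℂ))⁻¹ 0 := by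
    intro θ
    have h0U : (0:ℂ) ∈ {z : ℂ | (θ, z) ∈ 𝒰} := hzero θ
    have hGd : DifferentiableAt ℂ (G θ) 0 :=
      (hGdiff θ).differentiableAt ((hUopen θ).mem_nhds h0U)
    have hGc : HasDerivAt (G θ) (deriv (G θ) 0) 0 := hGd.hasDerivAt
    have hGc' : HasDerivAt (G θ) (deriv (G θ) 0) (h θ 0) := by rwa [hfixh θ]
    have hcomp : HasDerivAt (fun z => G θ (h θ z)) (deriv (G θ) 0 * (R θ : ℂ)) 0 := by
      simpa [Function.comp_def] using hGc'.comp 0 (hderivh θ)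
    have heq : (fun z => G θ (h θ z)) =ᶠ[nhds 0] fun z => z :=
      Filter.eventually_of_mem (hDopen.mem_nhds h0D) fun z hz => hGleft θ z hz
    have hid : HasDerivAt (fun z : ℂ => z) (deriv (G θ) 0 * (R θ : ℂ)) 0 :=
      hcomp.congr_of_eventuallyEq heq.symm
    have hone' : deriv (G θ) 0 * (R θ : ℂ) = 1 := hid.unique (hasDerivAt_id 0)
    have hc : deriv (G θ) 0 = ((R θ : ℂ))⁻¹ := by
      field_simp [hRne θ]
      linear_combination hone'
    rwa [hc] at hGc
  -- Step 1: monotonicity along the dynamics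
  have mono : ∀ θ : Torus d, R θ ≤ R (θ + α) := by
    intro θ
    have hmapφ : Set.MapsTo (fun z => f θ (h θ z)) (ball (0:ℂ) 1) {z : ℂ | (θ + α, z) ∈ 𝒰} :=
      fun z hz => hinv (θ, h θ z) ((hbij θ).mapsTo hz)
    have hφdiff : DifferentiableOn ℂ (fun z => f θ (h θ z)) (ball (0:ℂ) 1) :=
      (hhol θ).comp (hholh θ) (hbij θ).mapsTo
    have hψdiff : DifferentiableOn ℂ (fun z => G (θ + α) (f θ (h θ z))) (ball (0:ℂ) 1) :=
      (hGdiff (θ + α)).comp hφdiff hmapφ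
    have hψ0 : G (θ + α) (f θ (h θ 0)) = 0 := by rw [hfixh, hfix, hG0]
    have hψmaps : Set.MapsTo (fun z => G (θ + α) (f θ (h θ z))) (ball (0:ℂ) 1)
        (ball (G (θ + α) (f θ (h θ 0))) 1) := by
      rw [hψ0]
      exact fun z hz => hGmaps (θ + α) (hmapφ hz)
    have hfd : HasDerivAt (f θ) (deriv (f θ) 0) 0 :=
      ((hhol θ).differentiableAt ((hUopen θ).mem_nhds (hzero θ))).hasDerivAt
    have hfd' : HasDerivAt (f θ) (deriv (f θ) 0) (h θ 0) := by rwa [hfixh θ]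
    have h1 : HasDerivAt (fun z => f θ (h θ z)) (deriv (f θ) 0 * (R θ : ℂ)) 0 := by
      simpa [Function.comp_def] using hfd'.comp 0 (hderivh θ)
    have h2 : HasDerivAt (G (θ + α)) ((R (θ + α) : ℂ))⁻¹ (f θ (h θ 0)) := by
      rw [hfixh, hfix]; exact hGderiv (θ + α)
    have hcomp : HasDerivAt (fun z => G (θ + α) (f θ (h θ z)))
        (((R (θ + α) : ℂ))⁻¹ * (deriv (f θ) 0 * (R θ : ℂ))) 0 := by
      simpa [Function.comp_def] using h2.comp 0 h1
    have hsch := Complex.norm_deriv_le_div_of_mapsTo_ball hψdiff (hψmaps.mono_right ball_subset_closedBall) one_pos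
    rw [hcomp.deriv] at hsch
    have hnorm : ‖((R (θ + α) : ℂ))⁻¹ * (deriv (f θ) 0 * (R θ : ℂ))‖
        = (R (θ + α))⁻¹ * R θ := by
      rw [norm_mul, norm_inv, norm_mul, hone θ, Complex.norm_real, Complex.norm_real,
        Real.norm_eq_abs, Real.norm_eq_abs, abs_of_pos (hpos (θ + α)), abs_of_pos (hpos θ),
        one_mul]
    rw [hnorm] at hsch
    have hsch' : (R (θ + α))⁻¹ * R θ ≤ 1 := by simpa using hsch
    have hmul := mul_le_mul_of_nonneg_left hsch' (hpos (θ + α)).le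
    rwa [← mul_assoc, mul_inv_cancel₀ (hpos (θ + α)).ne', one_mul, mul_one] at hmul
  have mono_n : ∀ (θ : Torus d) (n : ℕ), R θ ≤ R (θ + n • α) := by
    intro θ n
    induction n with
    | zero => simp
    | succ n ih =>
        calc R θ ≤ R (θ + n • α) := ih
        _ ≤ R (θ + n • α + α) := mono _
        _ = R (θ + (n + 1) • α) := by rw [succ_nsmul, add_assoc]
  -- Step 2: lower semicontinuity estimate
  have step2 : ∀ (θ₀ : Torus d) (r : ℝ), 0 < r → r < 1 →
      ∃ V : Set (Torus d), IsOpen V ∧ θ₀ ∈ V ∧ ∀ θ ∈ V, r * R θ₀ ≤ R θ := by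
    intro θ₀ r hr0 hr1
    have hcb : closedBall (0:ℂ) r ⊆ ball (0:ℂ) 1 := closedBall_subset_ball hr1
    have hKcomp : IsCompact (h θ₀ '' closedBall (0:ℂ) r) :=
      (isCompact_closedBall (0:ℂ) r).image_of_continuousOn
        ((hholh θ₀).continuousOn.mono hcb)
    have hKsub : ({θ₀} ×ˢ (h θ₀ '' closedBall (0:ℂ) r) : Set (Torus d × ℂ)) ⊆ 𝒰 := by
      rintro ⟨θ, z⟩ ⟨hθ, hz⟩
      obtain ⟨x, hx, rfl⟩ := hz
      have hθθ : θ = θ₀ := hθ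
      rw [hθθ]
      exact (hbij θ₀).mapsTo (hcb hx)
    obtain ⟨V, W, hVopen, hWopen, hθ₀V, hKW, hVW⟩ :=
      generalized_tube_lemma isCompact_singleton hKcomp hopen hKsub
    refine ⟨V, hVopen, hθ₀V rfl, ?_⟩
    intro θ hθV
    have hmaps1 : Set.MapsTo (h θ₀) (ball (0:ℂ) r) {z : ℂ | (θ, z) ∈ 𝒰} := by
      intro z hz
      exact hVW ⟨hθV, hKW ⟨z, ball_subset_closedBall hz, rfl⟩⟩
    have hψdiff : DifferentiableOn ℂ (fun z => G θ (h θ₀ z)) (ball (0:ℂ) r) :=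
      (hGdiff θ).comp ((hholh θ₀).mono (ball_subset_ball hr1.le)) hmaps1
    have hψ0 : G θ (h θ₀ 0) = 0 := by rw [hfixh, hG0]
    have hψmaps : Set.MapsTo (fun z => G θ (h θ₀ z)) (ball (0:ℂ) r)
        (ball (G θ (h θ₀ 0)) 1) := by
      rw [hψ0]
      exact fun z hz => hGmaps θ (hmaps1 hz)
    have h2 : HasDerivAt (G θ) ((R θ : ℂ))⁻¹ (h θ₀ 0) := by
      rw [hfixh]; exact hGderiv θ
    have hcomp : HasDerivAt (fun z => G θ (h θ₀ z)) (((R θ : ℂ))⁻¹ * (R θ₀ : ℂ)) 0 := by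
      simpa [Function.comp_def] using h2.comp 0 (hderivh θ₀)
    have hsch := Complex.norm_deriv_le_div_of_mapsTo_ball hψdiff (hψmaps.mono_right ball_subset_closedBall) hr0
    rw [hcomp.deriv] at hsch
    have hnorm : ‖((R θ : ℂ))⁻¹ * (R θ₀ : ℂ)‖ = (R θ)⁻¹ * R θ₀ := by
      rw [norm_mul, norm_inv, Complex.norm_real, Complex.norm_real,
        Real.norm_eq_abs, Real.norm_eq_abs, abs_of_pos (hpos θ), abs_of_pos (hpos θ₀)]
    rw [hnorm] at hsch
    have h3 : r * ((R θ)⁻¹ * R θ₀) ≤ r * (1 / r) := mul_le_mul_of_nonneg_left hsch hr0.le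
    rw [mul_one_div, div_self hr0.ne'] at h3
    have h4 : (r * R θ₀) / R θ ≤ 1 := by
      calc (r * R θ₀) / R θ = r * ((R θ)⁻¹ * R θ₀) := by
            rw [div_eq_mul_inv]; ring
        _ ≤ 1 := h3
    exact (div_le_one (hpos θ)).mp h4
  -- Step 3: density argument
  have main : ∀ θ θ' : Torus d, R θ' ≤ R θ := by
    intro θ θ'
    have key : ∀ r : ℝ, 0 < r → r < 1 → r * R θ' ≤ R θ := by
      intro r hr0 hr1
      obtain ⟨V, hVopen, hθ'V, hVle⟩ := step2 θ' r hr0 hr1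
      have hdense : Dense (Set.range fun n : ℕ => θ - n • α) := by
        have h0 : Dense (Set.range fun n : ℕ => (0:Torus d) + n • α) := hα 0
        have hsurj : Function.Surjective (fun x : Torus d => θ - x) :=
          fun y => ⟨θ - y, sub_sub_cancel θ y⟩
        have hcont' : Continuous (fun x : Torus d => θ - x) :=
          continuous_const.sub continuous_id
        have himg := hsurj.denseRange.dense_image hcont' h0
        have heq : ((fun x : Torus d => θ - x) '' Set.range fun n : ℕ => (0:Torus d) + n • α)
            = Set.range fun n : ℕ => θ - n • α := by
          rw [← Set.range_comp]
          simp only [Function.comp_def, zero_add]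
        rwa [heq] at himg
      obtain ⟨x, ⟨n, rfl⟩, hxV⟩ := hdense.exists_mem_open hVopen ⟨θ', hθ'V⟩
      have h1 : r * R θ' ≤ R (θ - n • α) := hVle _ hxV
      have h2 : R (θ - n • α) ≤ R (θ - n • α + n • α) := mono_n _ n
      rw [sub_add_cancel] at h2
      exact h1.trans h2
    by_contra hlt
    push_neg at hlt
    set x := R θ / R θ' with hxdef
    have hx1 : x < 1 := (div_lt_one (hpos θ')).mpr hlt
    have hx0 : 0 < x := div_pos (hpos θ) (hpos θ')
    have hr0 : 0 < (x + 1) / 2 := by linarith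
    have hr1 : (x + 1) / 2 < 1 := by linarith
    have hxr : x < (x + 1) / 2 := by linarith
    have hgt : R θ < (x + 1) / 2 * R θ' := by
      have := (div_lt_iff₀ (hpos θ')).mp hxr
      linarith
    exact absurd (key _ hr0 hr1) (not_le.mpr hgt)
  exact fun θ θ' => le_antisymm (main θ' θ) (main θ θ')
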